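/- In the tanh-network setting, for every θ in Θ the gradient estimator is unbiased: for every parameter component θ^k (an entry of some W_i or b_i), the partial derivative ∂/∂θ^k of θ ↦ E_z[f(θ, z)] exists and equals E_z[∂f/∂θ^k(θ, z)]. -/

import Mathlib

open MeasureTheory
open scoped BigOperators

noncomputable section

/-- Parameter space of an `n`-layer fully connected network with layer widths `κ`:
for each layer `i` a weight matrix `W_i ∈ ℝ^{κ(i+1) × κ i}` and a bias `b_i ∈ ℝ^{κ(i+1)}`. -/
abbrev NNParams (κ : ℕ → ℕ) (n : ℕ) :=
  (i : Fin n) → ((Fin (κ (i.1 + 1)) → Fin (κ i.1) → ℝ) × (Fin (κ (i.1 + 1)) → ℝ))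

/-- The layers of the tanh network: `x₀ = z`, `x_{i+1} = tanh(W_{i+1} x_i + b_{i+1})`
entrywise for the hidden layers `i + 1 ≤ n - 1`, and the affine output layer
`x_n = W_n x_{n-1} + b_n` (junk value `0` beyond layer `n`). -/
def tanhNet (κ : ℕ → ℕ) (n : ℕ) (θ : NNParams κ n) (z : Fin (κ 0) → ℝ) :
    (i : ℕ) → Fin (κ i) → ℝ
  | 0 => z
  | (i + 1) =>
    if h : i < n then
      fun j =>
        let pre := (∑ l, (θ ⟨i, h⟩).1 j l * tanhNet κ n θ z i l) + (θ ⟨i, h⟩).2 j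
        if i + 2 ≤ n then Real.tanh pre else pre
    else 0

/-- Squared-error loss `f(θ,z) = ‖x_n(θ,z) − f̂(z)‖²` of the tanh network. -/
def tanhLoss (κ : ℕ → ℕ) (n : ℕ) (fhat : (Fin (κ 0) → ℝ) → (Fin (κ n) → ℝ))
    (θ : NNParams κ n) (z : Fin (κ 0) → ℝ) : ℝ :=
  ∑ j, (tanhNet κ n θ z n j - fhat z j) ^ 2

/-- The standard Gaussian measure on `ℝ^d` (i.i.d. `N(0,1)` coordinates). -/
def stdGaussian (d : ℕ) : Measure (Fin d → ℝ) :=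
  Measure.pi fun _ => ProbabilityTheory.gaussianReal 0 1

/-! ### Auxiliary lemmas -/

section Aux

open ProbabilityTheory Filter

instance stdGaussian.instIsProbabilityMeasure (d : ℕ) :
    IsProbabilityMeasure (stdGaussian d) := by
  unfold _root_.stdGaussian; infer_instance

lemma aux_hasDerivAt_tanh (x : ℝ) : HasDerivAt Real.tanh (((Real.cosh x)^2)⁻¹) x := by
  have h1 := Real.hasDerivAt_sinh x
  have h2 := Real.hasDerivAt_cosh x
  have h := h1.div h2 (Real.cosh_pos x).ne'
  have heq : (Real.cosh x * Real.cosh x - Real.sinh x * Real.sinh x) / Real.cosh x ^ 2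
      = ((Real.cosh x)^2)⁻¹ := by
    rw [show Real.cosh x * Real.cosh x - Real.sinh x * Real.sinh x = 1 by
      have := Real.cosh_sq_sub_sinh_sq x; nlinarith [this]]
    simp [one_div]
  rw [heq] at h
  have e : Real.tanh = fun y => Real.sinh y / Real.cosh y :=
    funext Real.tanh_eq_sinh_div_cosh
  rw [e]; exact h

lemma aux_abs_tanh_le_one (x : ℝ) : |Real.tanh x| ≤ 1 := by
  rw [Real.tanh_eq_sinh_div_cosh, abs_div, abs_of_pos (Real.cosh_pos x),
    div_le_one (Real.cosh_pos x)]
  nlinarith [Real.cosh_sq_sub_sinh_sq x, abs_nonneg (Real.sinh x), sq_abs (Real.sinh x),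
    Real.cosh_pos x]

lemma aux_abs_tanh_deriv_le_one (x : ℝ) : |((Real.cosh x)^2)⁻¹| ≤ 1 := by
  rw [abs_inv, abs_of_pos (by positivity : (0:ℝ) < Real.cosh x ^ 2)]
  rw [inv_le_one_iff₀]
  right
  nlinarith [Real.one_le_cosh x]

lemma aux_continuous_tanh : Continuous Real.tanh := by
  have : Real.tanh = fun x => Real.sinh x / Real.cosh x := by
    funext x; exact Real.tanh_eq_sinh_div_cosh x
  rw [this]
  exact Real.continuous_sinh.div Real.continuous_cosh fun x => (Real.cosh_pos x).ne'

lemma int_sq_gauss : Integrable (fun x : ℝ => x ^ 2) (gaussianReal 0 1) := by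
  rw [gaussianReal_of_var_ne_zero 0 one_ne_zero]
  rw [integrable_withDensity_iff (measurable_gaussianPDF 0 1)
    (ae_of_all _ fun x => ENNReal.ofReal_lt_top)]
  have heq : (fun x : ℝ => x ^ 2 * (gaussianPDF 0 1 x).toReal)
      = fun x => (Real.sqrt (2 * Real.pi * 1))⁻¹ * (x ^ (2:ℝ) * Real.exp (-(1/2) * x ^ 2)) := by
    ext x
    rw [gaussianPDF, ENNReal.toReal_ofReal (gaussianPDFReal_nonneg 0 1 x),
      gaussianPDFReal_def]
    rw [show ((2:ℝ)) = ((2:ℕ):ℝ) by norm_num, Real.rpow_natCast]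
    push_cast
    ring_nf
  rw [heq]
  exact (integrable_rpow_mul_exp_neg_mul_sq (by norm_num : (0:ℝ) < 1/2)
    (by norm_num : (-1:ℝ) < 2)).const_mul _

lemma map_eval_stdGaussian (d : ℕ) (l : Fin d) :
    Measure.map (fun z => z l) (stdGaussian d) = gaussianReal 0 1 := by
  apply Measure.ext; intro s hs
  rw [Measure.map_apply (measurable_pi_apply l) hs]
  have heq : (fun z : Fin d → ℝ => z l) ⁻¹' s
      = Set.pi Set.univ (Function.update (fun _ => Set.univ) l s) := by
    rw [← Set.eval_preimage]
  rw [heq, _root_.stdGaussian, Measure.pi_pi]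
  rw [Finset.prod_eq_single l]
  · rw [Function.update_self]
  · intro m _ hm; rw [Function.update_of_ne hm]; simp
  · simp

lemma int_coord_sq (d : ℕ) (l : Fin d) :
    Integrable (fun z : Fin d → ℝ => (z l) ^ 2) (stdGaussian d) := by
  have h := int_sq_gauss
  rw [← map_eval_stdGaussian d l] at h
  exact (integrable_map_measure
    ((continuous_pow 2).aestronglyMeasurable)
    (measurable_pi_apply l).aemeasurable).mp h

/-- Entry bound for the weight matrices. -/
lemma entryW_le {κ : ℕ → ℕ} {n : ℕ} (θ : NNParams κ n) (i : Fin n) (j : Fin (κ (i.1+1)))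
    (l : Fin (κ i.1)) : |(θ i).1 j l| ≤ ‖θ‖ :=
  calc |(θ i).1 j l| ≤ ‖(θ i).1 j‖ := by
        rw [← Real.norm_eq_abs]; exact norm_le_pi_norm _ l
    _ ≤ ‖(θ i).1‖ := norm_le_pi_norm _ j
    _ ≤ ‖θ i‖ := norm_fst_le (θ i)
    _ ≤ ‖θ‖ := norm_le_pi_norm θ i

/-- Entry bound for the biases. -/
lemma entryb_le {κ : ℕ → ℕ} {n : ℕ} (θ : NNParams κ n) (i : Fin n) (j : Fin (κ (i.1+1))) :
    |(θ i).2 j| ≤ ‖θ‖ :=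
  calc |(θ i).2 j| ≤ ‖(θ i).2‖ := by
        rw [← Real.norm_eq_abs]; exact norm_le_pi_norm _ j
    _ ≤ ‖θ i‖ := norm_snd_le (θ i)
    _ ≤ ‖θ‖ := norm_le_pi_norm θ i

/-- Measurability of the network in `z`. -/
lemma meas_net (κ : ℕ → ℕ) (n : ℕ) (θ : NNParams κ n) :
    ∀ i, ∀ j : Fin (κ i), Measurable fun z : Fin (κ 0) → ℝ => tanhNet κ n θ z i j := by
  intro i
  induction i with
  | zero => intro j; exact measurable_pi_apply j
  | succ i IH =>
    intro j
    by_cases h : i < n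
    · have e : (fun z => tanhNet κ n θ z (i+1) j) = fun z =>
        (if i + 2 ≤ n then
          Real.tanh ((∑ l, (θ ⟨i,h⟩).1 j l * tanhNet κ n θ z i l) + (θ ⟨i,h⟩).2 j)
        else ((∑ l, (θ ⟨i,h⟩).1 j l * tanhNet κ n θ z i l) + (θ ⟨i,h⟩).2 j)) := by
        funext z; rw [tanhNet, dif_pos h]
      rw [e]
      have hm : Measurable fun z =>
          (∑ l, (θ ⟨i,h⟩).1 j l * tanhNet κ n θ z i l) + (θ ⟨i,h⟩).2 j := by
        apply Measurable.add_const
        exact Finset.measurable_sum _ fun l _ => (IH l).const_mul _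
      split_ifs
      · exact aux_continuous_tanh.measurable.comp hm
      · exact hm
    · have e : (fun z => tanhNet κ n θ z (i+1) j) = fun _ => (0 : ℝ) := by
        funext z; rw [tanhNet, dif_neg h]; rfl
      rw [e]; exact measurable_const

/-- Measurability of the loss in `z`. -/
lemma meas_loss (κ : ℕ → ℕ) (n : ℕ) (fhat : (Fin (κ 0) → ℝ) → (Fin (κ n) → ℝ))
    (hfhat : Measurable fhat) (θ : NNParams κ n) :
    Measurable fun z => tanhLoss κ n fhat θ z := by
  unfold tanhLoss
  exact Finset.measurable_sum _ fun j _ =>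
    ((meas_net κ n θ n j).sub ((measurable_pi_apply j).comp hfhat)).pow_const 2

/-- Core induction: bounds and derivatives of the layers along a line in parameter space. -/
lemma core {κ : ℕ → ℕ} {n : ℕ} (θ v : NNParams κ n) :
    ∀ i, i ≤ n → ∃ A : ℝ, 0 ≤ A ∧ ∀ (z : Fin (κ 0) → ℝ) (t : ℝ), |t| ≤ 1 → ∀ j : Fin (κ i),
      |tanhNet κ n (θ + t • v) z i j| ≤ A * (1 + ∑ l, |z l|) ∧
      ∃ d : ℝ, HasDerivAt (fun s => tanhNet κ n (θ + s • v) z i j) d t ∧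
        |d| ≤ A * (1 + ∑ l, |z l|) := by
  intro i
  induction i with
  | zero =>
    intro _
    refine ⟨1, zero_le_one, fun z t ht j => ?_⟩
    have hS0 : (0:ℝ) ≤ ∑ l, |z l| := Finset.sum_nonneg fun l _ => abs_nonneg _
    constructor
    · rw [one_mul]
      calc |z j| ≤ ∑ l, |z l| :=
            Finset.single_le_sum (f := fun l => |z l|) (fun l _ => abs_nonneg _)
              (Finset.mem_univ j)
        _ ≤ 1 + ∑ l, |z l| := by linarith
    · exact ⟨0, hasDerivAt_const _ _, by rw [abs_zero, one_mul]; linarith⟩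
  | succ i IH =>
    intro hin
    have h : i < n := hin
    obtain ⟨A, hA, hIH⟩ := IH h.le
    set M : ℝ := ‖θ‖ + ‖v‖ with hMdef
    have hM0 : 0 ≤ M := by positivity
    refine ⟨(κ i : ℝ) * M * A * 2 + M + 1, by positivity, fun z t ht j => ?_⟩
    set S : ℝ := ∑ l, |z l| with hSdef
    have hS0 : 0 ≤ S := Finset.sum_nonneg fun l _ => abs_nonneg _
    have hS1 : (1:ℝ) ≤ 1 + S := by linarith
    -- data from the induction hypothesis at t
    have hIHt := hIH z t ht
    have hx : ∀ l, |tanhNet κ n (θ + t • v) z i l| ≤ A * (1 + S) := fun l => (hIHt l).1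
    choose d hd hdb using fun l => (hIHt l).2
    -- entry bounds
    have hWt : ∀ l, |((θ + t • v) ⟨i,h⟩).1 j l| ≤ M := by
      intro l
      have e : ((θ + t • v) ⟨i,h⟩).1 j l = (θ ⟨i,h⟩).1 j l + t * (v ⟨i,h⟩).1 j l := by
        simp [Prod.fst_add, Prod.smul_fst]
      rw [e]
      calc |(θ ⟨i,h⟩).1 j l + t * (v ⟨i,h⟩).1 j l|
          ≤ |(θ ⟨i,h⟩).1 j l| + |t| * |(v ⟨i,h⟩).1 j l| := by
            rw [← abs_mul]; exact abs_add_le _ _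
        _ ≤ ‖θ‖ + 1 * ‖v‖ := by
            have h1 := entryW_le θ ⟨i,h⟩ j l
            have h2 := entryW_le v ⟨i,h⟩ j l
            have := abs_nonneg ((v ⟨i,h⟩).1 j l)
            nlinarith
        _ = M := by rw [one_mul]
    have hVW : ∀ l, |(v ⟨i,h⟩).1 j l| ≤ M := by
      intro l
      have := entryW_le v ⟨i,h⟩ j l
      have := norm_nonneg θ
      linarith
    have hVb : |(v ⟨i,h⟩).2 j| ≤ M := by
      have := entryb_le v ⟨i,h⟩ j
      have := norm_nonneg θ
      linarith
    have hbt : |((θ + t • v) ⟨i,h⟩).2 j| ≤ M := by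
      have e : ((θ + t • v) ⟨i,h⟩).2 j = (θ ⟨i,h⟩).2 j + t * (v ⟨i,h⟩).2 j := by
        simp [Prod.snd_add, Prod.smul_snd]
      rw [e]
      calc |(θ ⟨i,h⟩).2 j + t * (v ⟨i,h⟩).2 j|
          ≤ |(θ ⟨i,h⟩).2 j| + |t| * |(v ⟨i,h⟩).2 j| := by
            rw [← abs_mul]; exact abs_add_le _ _
        _ ≤ ‖θ‖ + 1 * ‖v‖ := by
            have h1 := entryb_le θ ⟨i,h⟩ j
            have h2 := entryb_le v ⟨i,h⟩ j
            have := abs_nonneg ((v ⟨i,h⟩).2 j)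
            nlinarith
        _ = M := by rw [one_mul]
    -- the preactivation and its derivative
    set P : ℝ → ℝ := fun s =>
      (∑ l, ((θ + s • v) ⟨i,h⟩).1 j l * tanhNet κ n (θ + s • v) z i l)
        + ((θ + s • v) ⟨i,h⟩).2 j with hPdef
    set D : ℝ :=
      (∑ l, ((v ⟨i,h⟩).1 j l * tanhNet κ n (θ + t • v) z i l
        + ((θ + t • v) ⟨i,h⟩).1 j l * d l)) + (v ⟨i,h⟩).2 j with hDdef
    have hPderiv : HasDerivAt P D t := by
      apply HasDerivAt.add
      · apply HasDerivAt.fun_sum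
        intro l _
        have e1 : (fun s : ℝ => ((θ + s • v) ⟨i,h⟩).1 j l)
            = fun s => (θ ⟨i,h⟩).1 j l + s * (v ⟨i,h⟩).1 j l := by
          funext s; simp [Prod.fst_add, Prod.smul_fst]
        have h1 : HasDerivAt (fun s : ℝ => ((θ + s • v) ⟨i,h⟩).1 j l)
            ((v ⟨i,h⟩).1 j l) t := by
          rw [e1]; exact (hasDerivAt_mul_const _).const_add _
        exact h1.mul (hd l)
      · have e2 : (fun s : ℝ => ((θ + s • v) ⟨i,h⟩).2 j)
            = fun s => (θ ⟨i,h⟩).2 j + s * (v ⟨i,h⟩).2 j := by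
          funext s; simp [Prod.snd_add, Prod.smul_snd]
        rw [e2]; exact (hasDerivAt_mul_const _).const_add _
    -- bounds on P t and D
    have hPt : |P t| ≤ ((κ i : ℝ) * M * A + M) * (1 + S) := by
      have hsum : |∑ l, ((θ + t • v) ⟨i,h⟩).1 j l * tanhNet κ n (θ + t • v) z i l|
          ≤ (κ i : ℝ) * (M * (A * (1 + S))) := by
        calc |∑ l, ((θ + t • v) ⟨i,h⟩).1 j l * tanhNet κ n (θ + t • v) z i l|
            ≤ ∑ l, |((θ + t • v) ⟨i,h⟩).1 j l * tanhNet κ n (θ + t • v) z i l| :=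
              Finset.abs_sum_le_sum_abs _ _
          _ ≤ ∑ _l : Fin (κ i), M * (A * (1 + S)) := by
              apply Finset.sum_le_sum
              intro l _
              rw [abs_mul]
              exact mul_le_mul (hWt l) (hx l) (abs_nonneg _) hM0
          _ = (κ i : ℝ) * (M * (A * (1 + S))) := by
              rw [Finset.sum_const, Finset.card_univ, Fintype.card_fin, nsmul_eq_mul]
      calc |P t| ≤ |∑ l, ((θ + t • v) ⟨i,h⟩).1 j l * tanhNet κ n (θ + t • v) z i l|
            + |((θ + t • v) ⟨i,h⟩).2 j| := abs_add_le _ _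
        _ ≤ (κ i : ℝ) * (M * (A * (1 + S))) + M := add_le_add hsum hbt
        _ ≤ ((κ i : ℝ) * M * A + M) * (1 + S) := by nlinarith [mul_nonneg hM0 hS0]
    have hD : |D| ≤ ((κ i : ℝ) * M * A * 2 + M) * (1 + S) := by
      have hsum : |∑ l, ((v ⟨i,h⟩).1 j l * tanhNet κ n (θ + t • v) z i l
          + ((θ + t • v) ⟨i,h⟩).1 j l * d l)| ≤ (κ i : ℝ) * (2 * (M * (A * (1 + S)))) := by
        calc |∑ l, ((v ⟨i,h⟩).1 j l * tanhNet κ n (θ + t • v) z i l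
            + ((θ + t • v) ⟨i,h⟩).1 j l * d l)|
            ≤ ∑ l, |(v ⟨i,h⟩).1 j l * tanhNet κ n (θ + t • v) z i l
              + ((θ + t • v) ⟨i,h⟩).1 j l * d l| := Finset.abs_sum_le_sum_abs _ _
          _ ≤ ∑ _l : Fin (κ i), 2 * (M * (A * (1 + S))) := by
              apply Finset.sum_le_sum
              intro l _
              calc |(v ⟨i,h⟩).1 j l * tanhNet κ n (θ + t • v) z i l
                  + ((θ + t • v) ⟨i,h⟩).1 j l * d l|
                  ≤ |(v ⟨i,h⟩).1 j l| * |tanhNet κ n (θ + t • v) z i l|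
                    + |((θ + t • v) ⟨i,h⟩).1 j l| * |d l| := by
                    rw [← abs_mul, ← abs_mul]; exact abs_add_le _ _
                _ ≤ M * (A * (1 + S)) + M * (A * (1 + S)) := add_le_add
                    (mul_le_mul (hVW l) (hx l) (abs_nonneg _) hM0)
                    (mul_le_mul (hWt l) (hdb l) (abs_nonneg _) hM0)
                _ = 2 * (M * (A * (1 + S))) := by ring
          _ = (κ i : ℝ) * (2 * (M * (A * (1 + S)))) := by
              rw [Finset.sum_const, Finset.card_univ, Fintype.card_fin, nsmul_eq_mul]
      calc |D| ≤ |∑ l, ((v ⟨i,h⟩).1 j l * tanhNet κ n (θ + t • v) z i l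
            + ((θ + t • v) ⟨i,h⟩).1 j l * d l)| + |(v ⟨i,h⟩).2 j| := abs_add_le _ _
        _ ≤ (κ i : ℝ) * (2 * (M * (A * (1 + S)))) + M := add_le_add hsum hVb
        _ ≤ ((κ i : ℝ) * M * A * 2 + M) * (1 + S) := by nlinarith [mul_nonneg hM0 hS0]
    -- the layer as a function of s
    have eF : (fun s => tanhNet κ n (θ + s • v) z (i+1) j)
        = fun s => (if i + 2 ≤ n then Real.tanh (P s) else P s) := by
      funext s; rw [tanhNet, dif_pos h]
    have hA1 : (1:ℝ) ≤ (κ i : ℝ) * M * A * 2 + M + 1 := by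
      have h0 : (0:ℝ) ≤ (κ i : ℝ) * M * A * 2 + M := by positivity
      linarith
    by_cases hlast : i + 2 ≤ n
    · constructor
      · have : tanhNet κ n (θ + t • v) z (i+1) j = Real.tanh (P t) := by
          rw [congrFun eF t, if_pos hlast]
        rw [this]
        calc |Real.tanh (P t)| ≤ 1 := aux_abs_tanh_le_one _
          _ ≤ ((κ i : ℝ) * M * A * 2 + M + 1) * (1 + S) := by
            have := mul_le_mul hA1 hS1 zero_le_one (le_trans zero_le_one hA1)
            linarith
      · refine ⟨((Real.cosh (P t))^2)⁻¹ * D, ?_, ?_⟩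
        · have hcomp := (aux_hasDerivAt_tanh (P t)).comp t hPderiv
          have : (fun s => tanhNet κ n (θ + s • v) z (i+1) j)
              = fun s => Real.tanh (P s) := by
            rw [eF]; funext s; rw [if_pos hlast]
          rw [this]; exact hcomp
        · calc |((Real.cosh (P t))^2)⁻¹ * D| = |((Real.cosh (P t))^2)⁻¹| * |D| := abs_mul _ _
            _ ≤ 1 * (((κ i : ℝ) * M * A * 2 + M) * (1 + S)) :=
                mul_le_mul (aux_abs_tanh_deriv_le_one _) hD (abs_nonneg _) zero_le_one
            _ ≤ ((κ i : ℝ) * M * A * 2 + M + 1) * (1 + S) := by nlinarith [hS0]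
    · constructor
      · have : tanhNet κ n (θ + t • v) z (i+1) j = P t := by
          rw [congrFun eF t, if_neg hlast]
        rw [this]
        calc |P t| ≤ ((κ i : ℝ) * M * A + M) * (1 + S) := hPt
          _ ≤ ((κ i : ℝ) * M * A * 2 + M + 1) * (1 + S) := by
            have hk : (0:ℝ) ≤ (κ i : ℝ) * M * A :=
              mul_nonneg (mul_nonneg (Nat.cast_nonneg (κ i)) hM0) hA
            nlinarith [mul_nonneg hk hS0, hS0, hk]
      · refine ⟨D, ?_, ?_⟩
        · have : (fun s => tanhNet κ n (θ + s • v) z (i+1) j) = P := by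
            rw [eF]; funext s; rw [if_neg hlast]
          rw [this]; exact hPderiv
        · calc |D| ≤ ((κ i : ℝ) * M * A * 2 + M) * (1 + S) := hD
            _ ≤ ((κ i : ℝ) * M * A * 2 + M + 1) * (1 + S) := by nlinarith [hS0]

/-- Bounds and derivatives for the loss along a line in parameter space. -/
lemma lossCore {κ : ℕ → ℕ} {n : ℕ} (fhat : (Fin (κ 0) → ℝ) → (Fin (κ n) → ℝ))
    (θ v : NNParams κ n) :
    ∃ A : ℝ, 0 ≤ A ∧ ∀ (z : Fin (κ 0) → ℝ) (t : ℝ), |t| ≤ 1 →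
      |tanhLoss κ n fhat (θ + t • v) z|
        ≤ A * (1 + ∑ l, |z l|)^2 + 2 * ∑ j, (fhat z j)^2 ∧
      ∃ d : ℝ, HasDerivAt (fun s => tanhLoss κ n fhat (θ + s • v) z) d t ∧
        |d| ≤ A * (1 + ∑ l, |z l|)^2 + 2 * ∑ j, (fhat z j)^2 := by
  obtain ⟨A, hA, hc⟩ := core θ v n le_rfl
  refine ⟨(κ n : ℝ) * (3 * A^2), by positivity, fun z t ht => ?_⟩
  set S : ℝ := ∑ l, |z l| with hSdef
  have hS0 : 0 ≤ S := Finset.sum_nonneg fun l _ => abs_nonneg _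
  have hS1 : (1:ℝ) ≤ 1 + S := by linarith
  have hct := hc z t ht
  have hx : ∀ j, |tanhNet κ n (θ + t • v) z n j| ≤ A * (1 + S) := fun j => (hct j).1
  choose d hd hdb using fun j => (hct j).2
  have termbound : ∀ j, (tanhNet κ n (θ + t • v) z n j - fhat z j)^2
      ≤ 2 * A^2 * (1 + S)^2 + 2 * (fhat z j)^2 := by
    intro j
    have h1 := hx j
    have h2 := abs_nonneg (tanhNet κ n (θ + t • v) z n j)
    have h3 := sq_abs (tanhNet κ n (θ + t • v) z n j)
    nlinarith [sq_nonneg (tanhNet κ n (θ + t • v) z n j + fhat z j),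
      sq_nonneg (tanhNet κ n (θ + t • v) z n j - fhat z j),
      mul_nonneg hA (le_trans zero_le_one hS1)]
  constructor
  · rw [abs_of_nonneg (Finset.sum_nonneg fun j _ => sq_nonneg _)]
    unfold tanhLoss
    calc ∑ j, (tanhNet κ n (θ + t • v) z n j - fhat z j)^2
        ≤ ∑ j, (2 * A^2 * (1 + S)^2 + 2 * (fhat z j)^2) :=
          Finset.sum_le_sum fun j _ => termbound j
      _ = (κ n : ℝ) * (2 * A^2 * (1 + S)^2) + 2 * ∑ j, (fhat z j)^2 := by
          rw [Finset.sum_add_distrib, Finset.sum_const, Finset.card_univ, Fintype.card_fin,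
            nsmul_eq_mul, ← Finset.mul_sum]
      _ ≤ (κ n : ℝ) * (3 * A^2) * (1 + S)^2 + 2 * ∑ j, (fhat z j)^2 := by
          have hk : (0:ℝ) ≤ (κ n : ℝ) * (A^2 * (1+S)^2) :=
            mul_nonneg (Nat.cast_nonneg (κ n))
              (mul_nonneg (sq_nonneg A) (sq_nonneg (1+S)))
          nlinarith [hk]
  · refine ⟨∑ j, ((2:ℕ) * (tanhNet κ n (θ + t • v) z n j - fhat z j)^(2-1) * d j), ?_, ?_⟩
    · have : (fun s : ℝ => tanhLoss κ n fhat (θ + s • v) z)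
          = fun s : ℝ => ∑ j, (tanhNet κ n (θ + s • v) z n j - fhat z j)^2 := rfl
      rw [this]
      exact HasDerivAt.fun_sum fun j _ => ((hd j).sub_const (fhat z j)).pow 2
    · calc |∑ j, ((2:ℕ) * (tanhNet κ n (θ + t • v) z n j - fhat z j)^(2-1) * d j)|
          ≤ ∑ j, |(2:ℕ) * (tanhNet κ n (θ + t • v) z n j - fhat z j)^(2-1) * d j| :=
            Finset.abs_sum_le_sum_abs _ _
        _ ≤ ∑ j, (3 * A^2 * (1 + S)^2 + 2 * (fhat z j)^2) := by
            apply Finset.sum_le_sum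
            intro j _
            have h1 := hx j
            have h2 := hdb j
            have e : |(2:ℕ) * (tanhNet κ n (θ + t • v) z n j - fhat z j)^(2-1) * d j|
                = 2 * (|tanhNet κ n (θ + t • v) z n j - fhat z j| * |d j|) := by
              rw [abs_mul, abs_mul]
              norm_num [mul_assoc]
            rw [e]
            have habs : |tanhNet κ n (θ + t • v) z n j - fhat z j|
                ≤ A * (1 + S) + |fhat z j| := by
              calc |tanhNet κ n (θ + t • v) z n j - fhat z j|
                  ≤ |tanhNet κ n (θ + t • v) z n j| + |fhat z j| := abs_sub _ _
                _ ≤ A * (1 + S) + |fhat z j| := by linarith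
            nlinarith [abs_nonneg (d j), abs_nonneg (fhat z j), sq_abs (fhat z j),
              abs_nonneg (tanhNet κ n (θ + t • v) z n j - fhat z j),
              sq_nonneg (|tanhNet κ n (θ + t • v) z n j - fhat z j| - |d j|),
              sq_nonneg (A * (1 + S) - |fhat z j|),
              mul_nonneg hA (le_trans zero_le_one hS1)]
        _ = (κ n : ℝ) * (3 * A^2 * (1 + S)^2) + 2 * ∑ j, (fhat z j)^2 := by
            rw [Finset.sum_add_distrib, Finset.sum_const, Finset.card_univ, Fintype.card_fin,
              nsmul_eq_mul, ← Finset.mul_sum]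
        _ = (κ n : ℝ) * (3 * A^2) * (1 + S)^2 + 2 * ∑ j, (fhat z j)^2 := by ring

/-- Integrability of the dominating function. -/
lemma boundInt {κ0 : ℕ} {fhat2 : (Fin κ0 → ℝ) → ℝ}
    (hmom0 : Integrable fhat2 (stdGaussian κ0)) (A : ℝ) :
    Integrable (fun z : Fin κ0 → ℝ => A * (1 + ∑ l, |z l|)^2 + 2 * fhat2 z)
      (stdGaussian κ0) := by
  apply Integrable.add _ (hmom0.const_mul 2)
  apply Integrable.const_mul
  have hint : Integrable (fun z : Fin κ0 → ℝ => 2 + 2 * (κ0 : ℝ) * ∑ l, (z l)^2)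
      (stdGaussian κ0) := by
    apply Integrable.add (integrable_const 2)
    exact (integrable_finset_sum _ fun l _ => int_coord_sq κ0 l).const_mul _
  apply hint.mono'
  · apply Continuous.aestronglyMeasurable
    exact (continuous_const.add (continuous_finset_sum _ fun l _ =>
      (continuous_apply l).abs)).pow 2
  · apply ae_of_all
    intro z
    rw [Real.norm_eq_abs, abs_of_nonneg (by positivity)]
    have hCS : (∑ l, |z l|)^2 ≤ (κ0 : ℝ) * ∑ l, (z l)^2 := by
      have := Finset.sum_mul_sq_le_sq_mul_sq Finset.univ (fun l : Fin κ0 => |z l|)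
        (fun _ => (1:ℝ))
      simp only [mul_one, one_pow, sq_abs, Finset.sum_const, Finset.card_univ,
        Fintype.card_fin, nsmul_eq_mul] at this
      nlinarith [this]
    have hS0 : (0:ℝ) ≤ ∑ l, |z l| := Finset.sum_nonneg fun l _ => abs_nonneg _
    nlinarith [hCS, hS0, sq_nonneg (1 - ∑ l, |z l|)]

/-- Main differentiation-under-the-integral-sign lemma. -/
lemma mainLine {κ : ℕ → ℕ} {n : ℕ} (fhat : (Fin (κ 0) → ℝ) → (Fin (κ n) → ℝ))
    (hfhat : Measurable fhat)
    (hmom0 : Integrable (fun z => ∑ j, (fhat z j) ^ 2) (stdGaussian (κ 0)))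
    (θ v : NNParams κ n) :
    HasLineDerivAt ℝ (fun θ' => ∫ z, tanhLoss κ n fhat θ' z ∂(stdGaussian (κ 0)))
      (∫ z, lineDeriv ℝ (fun θ' => tanhLoss κ n fhat θ' z) θ v ∂(stdGaussian (κ 0)))
      θ v := by
  obtain ⟨A, hA, hc⟩ := lossCore fhat θ v
  set μ := stdGaussian (κ 0) with hμ
  set B : (Fin (κ 0) → ℝ) → ℝ :=
    fun z => A * (1 + ∑ l, |z l|)^2 + 2 * ∑ j, (fhat z j)^2 with hBdef
  have hBint : Integrable B μ := boundInt hmom0 A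
  have hFmeas : ∀ t : ℝ, AEStronglyMeasurable
      (fun z => tanhLoss κ n fhat (θ + t • v) z) μ :=
    fun t => (meas_loss κ n fhat hfhat (θ + t • v)).aestronglyMeasurable
  have hder : ∀ (z : Fin (κ 0) → ℝ) (t : ℝ), |t| ≤ 1 →
      HasDerivAt (fun s => tanhLoss κ n fhat (θ + s • v) z)
        (deriv (fun s => tanhLoss κ n fhat (θ + s • v) z) t) t ∧
      |deriv (fun s => tanhLoss κ n fhat (θ + s • v) z) t| ≤ B z := by
    intro z t ht
    obtain ⟨_, d, hd, hdb⟩ := hc z t ht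
    rw [hd.deriv]
    exact ⟨hd, hdb⟩
  have hF'meas : AEStronglyMeasurable
      (fun z => deriv (fun s => tanhLoss κ n fhat (θ + s • v) z) (0:ℝ)) μ := by
    apply aestronglyMeasurable_of_tendsto_ae (u := Filter.atTop)
      (f := fun (m : ℕ) (z : Fin (κ 0) → ℝ) =>
        (tanhLoss κ n fhat (θ + (1/((m:ℝ)+1)) • v) z - tanhLoss κ n fhat (θ + (0:ℝ) • v) z)
          * ((m:ℝ)+1))
    · intro m
      exact (((meas_loss κ n fhat hfhat _).sub (meas_loss κ n fhat hfhat _)).mul_const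
        _).aestronglyMeasurable
    · apply ae_of_all
      intro z
      have hd := (hder z 0 (by norm_num)).1
      rw [hasDerivAt_iff_tendsto_slope] at hd
      have hu : Filter.Tendsto (fun m : ℕ => 1/((m:ℝ)+1)) Filter.atTop
          (nhdsWithin (0:ℝ) {(0:ℝ)}ᶜ) := by
        apply tendsto_nhdsWithin_of_tendsto_nhds_of_eventually_within
        · exact tendsto_one_div_add_atTop_nhds_zero_nat
        · apply Filter.Eventually.of_forall
          intro m
          simp only [Set.mem_compl_iff, Set.mem_singleton_iff]
          positivity
      have hcomp := hd.comp hu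
      apply hcomp.congr
      intro m
      have hne : ((m:ℝ)+1) ≠ 0 := by positivity
      simp only [Function.comp_apply, slope_def_field]
      field_simp
      ring
  have key := hasDerivAt_integral_of_dominated_loc_of_deriv_le
    (F := fun t z => tanhLoss κ n fhat (θ + t • v) z)
    (F' := fun t z => deriv (fun s => tanhLoss κ n fhat (θ + s • v) z) t)
    (x₀ := (0:ℝ)) (bound := B) (μ := μ) (Metric.ball_mem_nhds (0:ℝ) one_pos)
    (Filter.Eventually.of_forall hFmeas)
    (hBint.mono' (hFmeas 0) ?_)
    hF'meas ?_ hBint ?_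
  · exact key.2
  · -- integrability bound for F 0
    apply ae_of_all
    intro z
    rw [Real.norm_eq_abs]
    exact (hc z 0 (by norm_num)).1
  · -- bound on the ball
    apply ae_of_all
    intro z t htball
    rw [Real.norm_eq_abs]
    have ht : |t| ≤ 1 := by
      rw [Metric.mem_ball, Real.dist_eq, sub_zero] at htball
      exact htball.le
    exact (hder z t ht).2
  · -- differentiability on the ball
    apply ae_of_all
    intro z t htball
    have ht : |t| ≤ 1 := by
      rw [Metric.mem_ball, Real.dist_eq, sub_zero] at htball
      exact htball.le
    exact (hder z t ht).1

end Aux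

/-- **Unbiasedness of the gradient estimator for the tanh network (Theorem 2.4, item 1).** -/
theorem stmt_7 (κ : ℕ → ℕ) (n : ℕ) (hn : 1 ≤ n)
    (fhat : (Fin (κ 0) → ℝ) → (Fin (κ n) → ℝ)) (hfhat : Measurable fhat)
    (hmom0 : Integrable (fun z => ∑ j, (fhat z j) ^ 2) (stdGaussian (κ 0)))
    (hmom1 : ∀ k : Fin (κ 0),
      Integrable (fun z => (∑ j, (fhat z j) ^ 2) * |z k|) (stdGaussian (κ 0)))
    (hmom2 : ∀ k : Fin (κ 0),
      Integrable (fun z => (∑ j, (fhat z j) ^ 2) * |z k| ^ 2) (stdGaussian (κ 0)))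
    (Θ : Set (NNParams κ n)) (hΘb : Bornology.IsBounded Θ) (hΘc : Convex ℝ Θ) :
    ∀ θ ∈ Θ, ∀ i : Fin n,
      (∀ (j : Fin (κ (i.1 + 1))) (l : Fin (κ i.1)),
        HasLineDerivAt ℝ (fun θ' => ∫ z, tanhLoss κ n fhat θ' z ∂(stdGaussian (κ 0)))
          (∫ z, lineDeriv ℝ (fun θ' => tanhLoss κ n fhat θ' z) θ
              (Pi.single i (Pi.single j (Pi.single l 1), 0)) ∂(stdGaussian (κ 0)))
          θ (Pi.single i (Pi.single j (Pi.single l 1), 0))) ∧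
      (∀ j : Fin (κ (i.1 + 1)),
        HasLineDerivAt ℝ (fun θ' => ∫ z, tanhLoss κ n fhat θ' z ∂(stdGaussian (κ 0)))
          (∫ z, lineDeriv ℝ (fun θ' => tanhLoss κ n fhat θ' z) θ
              (Pi.single i (0, Pi.single j 1)) ∂(stdGaussian (κ 0)))
          θ (Pi.single i (0, Pi.single j 1))) := by
  intro θ _ i
  exact ⟨fun j l => mainLine fhat hfhat hmom0 θ _, fun j => mainLine fhat hfhat hmom0 θ _⟩
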